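/- arXiv:2604.17444 — 4 statements merged into one kernel-verified Lean document; each statement's English description precedes it below -/
import Mathlib

section
/- Let M₁ and M₂ be block lower-triangular Toeplitz matrices of size s×(s+n) blocks with block entries M^i_k = F_i A_{F_i}^{k-1} B for k > 0, M^i_0 = I, M^i_k = 0 for k < 0 (i = 1, 2), where A_{F_i} = A + B F_i. Let V be the (s+n)×(s+n)-block lower-triangular Toeplitz matrix with V_k = (F₁ - F₂) A_{F₁}^{k-1} B for k > 0, V_0 = I, V_k = 0 for k < 0. Then M₂ V = M₁. -/
open Matrix

/-- Block entry `M_k = F A_F^{k-1} B` for `k > 0`, `I` for `k = 0`, `0` for `k < 0`. -/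
noncomputable def Mblk {n p : ℕ} (A : Matrix (Fin n) (Fin n) ℝ)
    (B : Matrix (Fin n) (Fin p) ℝ) (F : Matrix (Fin p) (Fin n) ℝ) (k : ℤ) :
    Matrix (Fin p) (Fin p) ℝ :=
  if 0 < k then F * (A + B * F) ^ (k - 1).toNat * B else if k = 0 then 1 else 0

/-- Block entry `V_k = (F₁ - F₂) A_{F₁}^{k-1} B` for `k > 0`, `I` for `k = 0`, `0` for `k < 0`. -/
noncomputable def Vblk {n p : ℕ} (A : Matrix (Fin n) (Fin n) ℝ)
    (B : Matrix (Fin n) (Fin p) ℝ) (F₁ F₂ : Matrix (Fin p) (Fin n) ℝ) (k : ℤ) :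
    Matrix (Fin p) (Fin p) ℝ :=
  if 0 < k then (F₁ - F₂) * (A + B * F₁) ^ (k - 1).toNat * B else if k = 0 then 1 else 0

/-- The `s × (s+n)`-block Toeplitz matrix with `(l,j)`-th block `M_{n+l-j}`. -/
noncomputable def MToeplitz {n p : ℕ} (s : ℕ) (A : Matrix (Fin n) (Fin n) ℝ)
    (B : Matrix (Fin n) (Fin p) ℝ) (F : Matrix (Fin p) (Fin n) ℝ) :
    Matrix (Fin s × Fin p) (Fin (s + n) × Fin p) ℝ :=
  fun lq jb => Mblk A B F ((n : ℤ) + (lq.1 : ℤ) - (jb.1 : ℤ)) lq.2 jb.2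

/-- The `(s+n) × (s+n)`-block Toeplitz matrix with `(i,j)`-th block `V_{i-j}`. -/
noncomputable def VToeplitz {n p : ℕ} (s : ℕ) (A : Matrix (Fin n) (Fin n) ℝ)
    (B : Matrix (Fin n) (Fin p) ℝ) (F₁ F₂ : Matrix (Fin p) (Fin n) ℝ) :
    Matrix (Fin (s + n) × Fin p) (Fin (s + n) × Fin p) ℝ :=
  fun ia jb => Vblk A B F₁ F₂ ((ia.1 : ℤ) - (jb.1 : ℤ)) ia.2 jb.2

lemma key {n p : ℕ} (A : Matrix (Fin n) (Fin n) ℝ)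
    (B : Matrix (Fin n) (Fin p) ℝ) (F₁ F₂ : Matrix (Fin p) (Fin n) ℝ) (k : ℕ) :
    ∑ i ∈ Finset.range (k+1), Mblk A B F₂ ((k:ℤ) - i) * Vblk A B F₁ F₂ (i:ℤ) =
      Mblk A B F₁ (k:ℤ) := by
  cases k with
  | zero => simp [Mblk, Vblk]
  | succ k' =>
    have hBA : B * (F₁ - F₂) = (A + B * F₁) - (A + B * F₂) := by
      rw [Matrix.mul_sub]; abel
    set g : ℕ → Matrix (Fin p) (Fin p) ℝ :=
      fun i => F₂ * (A + B * F₂) ^ (k' - i) * (A + B * F₁) ^ i * B with hg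
    rw [Finset.sum_range_succ, Finset.sum_range_succ']
    have h0 : Mblk A B F₂ (((k'+1:ℕ):ℤ) - ((0:ℕ):ℤ)) * Vblk A B F₁ F₂ ((0:ℕ):ℤ) = g 0 := by
      have e : ((k'+1:ℕ):ℤ) - ((0:ℕ):ℤ) = ((k'+1:ℕ):ℤ) := by push_cast; ring
      rw [e]
      have h2 : (0:ℤ) < ((k'+1:ℕ):ℤ) := by positivity
      have h3 : (((k'+1:ℕ):ℤ) - 1).toNat = k' := by omega
      simp only [Mblk, Vblk, if_pos h2, h3, Nat.cast_zero, lt_irrefl, if_neg (lt_irrefl (0:ℤ)),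
        if_pos rfl, mul_one, hg, Nat.sub_zero, pow_zero]
      simp
    have hstep : ∀ i ∈ Finset.range k',
        Mblk A B F₂ (((k'+1:ℕ):ℤ) - ((i+1:ℕ):ℤ)) * Vblk A B F₁ F₂ ((i+1:ℕ):ℤ) =
          g (i+1) - g i := by
      intro i hi
      simp only [Finset.mem_range] at hi
      have h2 : (0:ℤ) < ((k'+1:ℕ):ℤ) - ((i+1:ℕ):ℤ) := by push_cast; omega
      have h3 : (0:ℤ) < ((i+1:ℕ):ℤ) := by positivity
      simp only [Mblk, Vblk, if_pos h2, if_pos h3, hg]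
      have h4 : ((((k'+1:ℕ):ℤ) - ((i+1:ℕ):ℤ)) - 1).toNat = k' - 1 - i := by omega
      have h5 : (((i+1:ℕ):ℤ) - 1).toNat = i := by omega
      have h6 : k' - (i+1) = k' - 1 - i := by omega
      have h7 : k' - i = (k' - 1 - i) + 1 := by omega
      rw [h4, h5, h6, h7]
      rw [pow_succ' (A + B * F₁) i, pow_succ (A + B * F₂) (k' - 1 - i)]
      have lhs_eq : F₂ * (A + B * F₂) ^ (k'-1-i) * B * ((F₁ - F₂) * (A + B * F₁) ^ i * B)
          = F₂ * (A + B * F₂) ^ (k'-1-i) * (B * (F₁ - F₂)) * (A + B * F₁) ^ i * B := by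
        simp only [Matrix.mul_assoc]
      rw [lhs_eq, hBA]
      simp only [Matrix.sub_mul, Matrix.mul_sub, Matrix.mul_assoc]
    rw [Finset.sum_congr rfl hstep, h0, Finset.sum_range_sub]
    have hlast : Mblk A B F₂ (((k'+1:ℕ):ℤ) - ((k'+1:ℕ):ℤ)) * Vblk A B F₁ F₂ ((k'+1:ℕ):ℤ)
        = (F₁ - F₂) * (A + B * F₁) ^ k' * B := by
      rw [sub_self]
      have h2 : (0:ℤ) < ((k'+1:ℕ):ℤ) := by positivity
      have h3 : (((k'+1:ℕ):ℤ) - 1).toNat = k' := by omega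
      simp only [Mblk, Vblk, lt_irrefl, if_neg (lt_irrefl (0:ℤ)), if_pos rfl, if_pos h2, h3,
        one_mul]
      simp
    rw [hlast]
    have hgk : g k' = F₂ * (A + B * F₁) ^ k' * B := by
      simp [hg]
    rw [hgk]
    have hR : Mblk A B F₁ ((k'+1:ℕ):ℤ) = F₁ * (A + B * F₁) ^ k' * B := by
      have h2 : (0:ℤ) < ((k'+1:ℕ):ℤ) := by positivity
      have h3 : (((k'+1:ℕ):ℤ) - 1).toNat = k' := by omega
      simp only [Mblk, if_pos h2, h3]
    rw [hR, Matrix.sub_mul, Matrix.sub_mul]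
    abel

lemma Mblk_neg {n p : ℕ} (A : Matrix (Fin n) (Fin n) ℝ)
    (B : Matrix (Fin n) (Fin p) ℝ) (F : Matrix (Fin p) (Fin n) ℝ) {k : ℤ} (hk : k < 0) :
    Mblk A B F k = 0 := by
  simp only [Mblk, if_neg (by omega : ¬ 0 < k), if_neg (by omega : ¬ k = 0)]

lemma Vblk_neg {n p : ℕ} (A : Matrix (Fin n) (Fin n) ℝ)
    (B : Matrix (Fin n) (Fin p) ℝ) (F₁ F₂ : Matrix (Fin p) (Fin n) ℝ) {k : ℤ} (hk : k < 0) :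
    Vblk A B F₁ F₂ k = 0 := by
  simp only [Vblk, if_neg (by omega : ¬ 0 < k), if_neg (by omega : ¬ k = 0)]

lemma block {n p : ℕ} (s : ℕ) (A : Matrix (Fin n) (Fin n) ℝ)
    (B : Matrix (Fin n) (Fin p) ℝ) (F₁ F₂ : Matrix (Fin p) (Fin n) ℝ)
    (l : Fin s) (m : Fin (s + n)) :
    ∑ j : Fin (s + n), Mblk A B F₂ ((n:ℤ) + (l:ℤ) - (j:ℤ)) * Vblk A B F₁ F₂ ((j:ℤ) - (m:ℤ)) =
      Mblk A B F₁ ((n:ℤ) + (l:ℤ) - (m:ℤ)) := by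
  have hsum : ∑ j : Fin (s + n),
      Mblk A B F₂ ((n:ℤ) + (l:ℤ) - (j:ℤ)) * Vblk A B F₁ F₂ ((j:ℤ) - (m:ℤ)) =
      ∑ j ∈ Finset.range (s + n),
        Mblk A B F₂ ((n:ℤ) + (l:ℤ) - (j:ℤ)) * Vblk A B F₁ F₂ ((j:ℤ) - (m:ℤ)) :=
    Fin.sum_univ_eq_sum_range
      (fun j : ℕ => Mblk A B F₂ ((n:ℤ) + (l:ℤ) - (j:ℤ)) * Vblk A B F₁ F₂ ((j:ℤ) - (m:ℤ))) (s+n)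
  rw [hsum]
  by_cases hm : n + l.val < m.val
  · rw [Mblk_neg A B F₁ (by push_cast; omega)]
    apply Finset.sum_eq_zero
    intro j hj
    by_cases hjl : n + l.val < j
    · rw [Mblk_neg A B F₂ (by push_cast; omega), Matrix.zero_mul]
    · rw [Vblk_neg A B F₁ F₂ (by push_cast; omega), Matrix.mul_zero]
  · push_neg at hm
    have hl : l.val < s := l.isLt
    have hsub : Finset.Icc m.val (n + l.val) ⊆ Finset.range (s + n) := by
      intro x hx
      simp only [Finset.mem_Icc] at hx
      simp only [Finset.mem_range]
      omega
    rw [← Finset.sum_subset hsub (by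
      intro x hx hxn
      simp only [Finset.mem_range] at hx
      simp only [Finset.mem_Icc, not_and_or, not_le] at hxn
      rcases hxn with h | h
      · rw [Vblk_neg A B F₁ F₂ (by push_cast; omega), Matrix.mul_zero]
      · rw [Mblk_neg A B F₂ (by push_cast; omega), Matrix.zero_mul])]
    rw [← Finset.Ico_add_one_right_eq_Icc, Finset.sum_Ico_eq_sum_range]
    have hK : n + l.val + 1 - m.val = (n + l.val - m.val) + 1 := by omega
    rw [hK]
    have := key A B F₁ F₂ (n + l.val - m.val)
    have harg : ∀ i, (n:ℤ) + (l:ℤ) - ((m.val + i : ℕ):ℤ) = ((n + l.val - m.val : ℕ):ℤ) - (i:ℕ) := by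
      intro i; push_cast; omega
    have harg2 : ∀ i : ℕ, ((m.val + i : ℕ):ℤ) - (m:ℤ) = (i:ℤ) := by
      intro i; push_cast; omega
    calc ∑ i ∈ Finset.range (n + l.val - m.val + 1),
          Mblk A B F₂ ((n:ℤ) + (l:ℤ) - ((m.val + i : ℕ):ℤ)) *
            Vblk A B F₁ F₂ (((m.val + i : ℕ):ℤ) - (m:ℤ))
        = ∑ i ∈ Finset.range (n + l.val - m.val + 1),
          Mblk A B F₂ (((n + l.val - m.val : ℕ):ℤ) - (i:ℤ)) * Vblk A B F₁ F₂ (i:ℤ) := by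
          refine Finset.sum_congr rfl fun i _ => ?_
          rw [harg i, harg2 i]
      _ = Mblk A B F₁ (((n + l.val - m.val : ℕ):ℤ)) := key A B F₁ F₂ _
      _ = Mblk A B F₁ ((n:ℤ) + (l:ℤ) - (m:ℤ)) := by
          congr 1; rw [Nat.cast_sub hm]; push_cast; ring

/-- `M₂ V = M₁`: the block Toeplitz matrix of the image representation for gain `F₂`,
right-multiplied by the Toeplitz matrix of `V`, yields the one for gain `F₁`. -/
theorem MToeplitz_mul_VToeplitz {n p : ℕ} (s : ℕ) (A : Matrix (Fin n) (Fin n) ℝ)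
    (B : Matrix (Fin n) (Fin p) ℝ) (F₁ F₂ : Matrix (Fin p) (Fin n) ℝ) :
    MToeplitz s A B F₂ * VToeplitz s A B F₁ F₂ = MToeplitz s A B F₁ := by
  ext ⟨l, q⟩ ⟨m, b⟩
  rw [Matrix.mul_apply, Fintype.sum_prod_type]
  simp only [MToeplitz, VToeplitz]
  calc ∑ j : Fin (s + n), ∑ r : Fin p,
        Mblk A B F₂ ((n:ℤ) + (l:ℤ) - (j:ℤ)) q r * Vblk A B F₁ F₂ ((j:ℤ) - (m:ℤ)) r b
      = ∑ j : Fin (s + n),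
        (Mblk A B F₂ ((n:ℤ) + (l:ℤ) - (j:ℤ)) * Vblk A B F₁ F₂ ((j:ℤ) - (m:ℤ))) q b := by
        refine Finset.sum_congr rfl fun j _ => ?_
        rw [Matrix.mul_apply]
    _ = (∑ j : Fin (s + n),
        Mblk A B F₂ ((n:ℤ) + (l:ℤ) - (j:ℤ)) * Vblk A B F₁ F₂ ((j:ℤ) - (m:ℤ))) q b := by
        rw [Matrix.sum_apply]
    _ = Mblk A B F₁ ((n:ℤ) + (l:ℤ) - (m:ℤ)) q b := by rw [block s A B F₁ F₂ l m]
end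

section
/- Let N₁ and N₂ be block Toeplitz matrices with block entries N^i_k = C_{F_i} A_{F_i}^{k-1} B for k > 0, N^i_0 = D, N^i_k = 0 for k < 0, where C_{F_i} = C + D F_i and A_{F_i} = A + B F_i (i = 1, 2). Let V be the block lower-triangular Toeplitz matrix with V_k = (F₁ - F₂) A_{F₁}^{k-1} B for k > 0, V_0 = I, V_k = 0 for k < 0. Then N₂ V = N₁. -/
open Matrix

/-- Block entry `N_k = C_F A_F^{k-1} B` for `k > 0`, `D` for `k = 0`, `0` for `k < 0`,
where `C_F = C + D F` and `A_F = A + B F`. -/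
noncomputable def Nblk {n p m : ℕ} (A : Matrix (Fin n) (Fin n) ℝ)
    (B : Matrix (Fin n) (Fin p) ℝ) (C : Matrix (Fin m) (Fin n) ℝ)
    (D : Matrix (Fin m) (Fin p) ℝ) (F : Matrix (Fin p) (Fin n) ℝ) (k : ℤ) :
    Matrix (Fin m) (Fin p) ℝ :=
  if 0 < k then (C + D * F) * (A + B * F) ^ (k - 1).toNat * B else if k = 0 then D else 0

/-- The `s × (s+n)`-block Toeplitz matrix with `(l,j)`-th block `N_{n+l-j}`. -/
noncomputable def NToeplitz {n p m : ℕ} (s : ℕ) (A : Matrix (Fin n) (Fin n) ℝ)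
    (B : Matrix (Fin n) (Fin p) ℝ) (C : Matrix (Fin m) (Fin n) ℝ)
    (D : Matrix (Fin m) (Fin p) ℝ) (F : Matrix (Fin p) (Fin n) ℝ) :
    Matrix (Fin s × Fin m) (Fin (s + n) × Fin p) ℝ :=
  fun la jb => Nblk A B C D F ((n : ℤ) + (la.1 : ℤ) - (jb.1 : ℤ)) la.2 jb.2

variable {n p m : ℕ}

lemma pow_expand (A : Matrix (Fin n) (Fin n) ℝ) (B : Matrix (Fin n) (Fin p) ℝ)
    (F₁ F₂ : Matrix (Fin p) (Fin n) ℝ) (M : ℕ) :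
    (A + B * F₁) ^ M = (A + B * F₂) ^ M +
      ∑ t ∈ Finset.range M, (A + B * F₂) ^ t * (B * (F₁ - F₂)) * (A + B * F₁) ^ (M - 1 - t) := by
  induction M with
  | zero => simp
  | succ M ih =>
    have key : (A + B * F₁) = (A + B * F₂) + B * (F₁ - F₂) := by
      rw [Matrix.mul_sub]; abel
    calc (A + B * F₁) ^ (M+1) = (A + B * F₁) * (A + B * F₁) ^ M := by rw [pow_succ']
    _ = (A + B * F₂) * (A + B * F₁) ^ M + (B * (F₁ - F₂)) * (A + B * F₁) ^ M := by
        rw [key, add_mul]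
    _ = (A + B * F₂) * ((A + B * F₂) ^ M +
          ∑ t ∈ Finset.range M, (A + B * F₂) ^ t * (B * (F₁ - F₂)) * (A + B * F₁) ^ (M - 1 - t))
        + (B * (F₁ - F₂)) * (A + B * F₁) ^ M := by rw [← ih]
    _ = (A + B * F₂) ^ (M+1) +
        ∑ t ∈ Finset.range (M+1), (A + B * F₂) ^ t * (B * (F₁ - F₂)) * (A + B * F₁) ^ (M + 1 - 1 - t) := by
        rw [Finset.sum_range_succ']
        simp only [pow_zero, one_mul, Nat.sub_zero, Nat.add_sub_cancel]
        rw [mul_add, Finset.mul_sum, ← pow_succ', add_assoc]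
        congr 2
        apply Finset.sum_congr rfl
        intro t ht
        rw [← mul_assoc, ← mul_assoc, ← pow_succ']
        congr 2
        omega

lemma core (A : Matrix (Fin n) (Fin n) ℝ) (B : Matrix (Fin n) (Fin p) ℝ)
    (C : Matrix (Fin m) (Fin n) ℝ) (D : Matrix (Fin m) (Fin p) ℝ)
    (F₁ F₂ : Matrix (Fin p) (Fin n) ℝ) (k : ℕ) :
    ∑ t ∈ Finset.range (k+1), Nblk A B C D F₂ ((k:ℤ) - (t:ℤ)) * Vblk A B F₁ F₂ (t:ℤ)
      = Nblk A B C D F₁ (k:ℤ) := by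
  match k with
  | 0 => simp [Nblk, Vblk]
  | (k'+1) =>
    rw [Finset.sum_range_succ, Finset.sum_range_succ']
    push_cast
    have hz : (k':ℤ) + 1 - ((k':ℤ)+1) = 0 := by ring
    rw [hz]
    have hN0 : Nblk A B C D F₂ (0:ℤ) = D := by simp [Nblk]
    have hV0 : Vblk A B F₁ F₂ (0:ℤ) = 1 := by simp [Vblk]
    have hNtop : Nblk A B C D F₂ ((k':ℤ) + 1 - 0) = (C + D*F₂) * (A + B*F₂)^k' * B := by
      rw [Nblk, if_pos (by omega)]
      have : ((k':ℤ) + 1 - 0 - 1).toNat = k' := by omega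
      rw [this]
    have hVtop : Vblk A B F₁ F₂ ((k':ℤ) + 1) = (F₁ - F₂) * (A + B*F₁)^k' * B := by
      rw [Vblk, if_pos (by omega)]
      have : ((k':ℤ) + 1 - 1).toNat = k' := by omega
      rw [this]
    have hN1 : Nblk A B C D F₁ ((k':ℤ) + 1) = (C + D*F₁) * (A + B*F₁)^k' * B := by
      rw [Nblk, if_pos (by omega)]
      have : ((k':ℤ) + 1 - 1).toNat = k' := by omega
      rw [this]
    have hmid : ∀ t ∈ Finset.range k',
        Nblk A B C D F₂ ((k':ℤ) + 1 - ((t:ℤ)+1)) * Vblk A B F₁ F₂ ((t:ℤ)+1)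
          = (C + D*F₂) * (A + B*F₂)^(k'-1-t) * B * ((F₁ - F₂) * (A + B*F₁)^t * B) := by
      intro t ht
      simp only [Finset.mem_range] at ht
      rw [Nblk, if_pos (by omega), Vblk, if_pos (by omega)]
      have e1 : ((k':ℤ) + 1 - ((t:ℤ)+1) - 1).toNat = k' - 1 - t := by omega
      have e2 : ((t:ℤ) + 1 - 1).toNat = t := by omega
      rw [e1, e2]
    rw [Finset.sum_congr rfl hmid, hN0, hV0, hNtop, hVtop, hN1]
    have expand3 : (A+B*F₁)^k' = (A+B*F₂)^k' +
        ∑ t ∈ Finset.range k', (A+B*F₂)^(k'-1-t) * (B*(F₁-F₂)) * (A+B*F₁)^t := by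
      rw [pow_expand A B F₁ F₂ k',
        ← Finset.sum_range_reflect (fun t => (A+B*F₂)^(k'-1-t) * (B*(F₁-F₂)) * (A+B*F₁)^t) k']
      congr 1
      apply Finset.sum_congr rfl
      intro t ht
      simp only [Finset.mem_range] at ht
      have e : k' - 1 - (k' - 1 - t) = t := by omega
      rw [e]
    have hC : (C+D*F₂) * (A+B*F₁)^k' * B = (C+D*F₂)*(A+B*F₂)^k'*B +
        ∑ t ∈ Finset.range k', (C+D*F₂)*(A+B*F₂)^(k'-1-t)*B*((F₁-F₂)*(A+B*F₁)^t*B) := by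
      rw [expand3, Matrix.mul_add, Matrix.add_mul, Matrix.mul_sum, Matrix.sum_mul]
      congr 1
      apply Finset.sum_congr rfl
      intro t ht
      simp only [Matrix.mul_assoc]
    have hS : ∑ t ∈ Finset.range k', (C+D*F₂)*(A+B*F₂)^(k'-1-t)*B*((F₁-F₂)*(A+B*F₁)^t*B)
        = (C+D*F₂)*(A+B*F₁)^k'*B - (C+D*F₂)*(A+B*F₂)^k'*B := by
      rw [hC]
      abel
    rw [hS]
    set X := (A+B*F₁)^k' with hX
    set Y := (A+B*F₂)^k' with hY
    have hD : D * ((F₁ - F₂)*X*B) = (C + D*F₁)*X*B - (C + D*F₂)*X*B := by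
      simp only [Matrix.sub_mul, Matrix.mul_sub, Matrix.add_mul, Matrix.mul_assoc]
      abel
    rw [Matrix.mul_one, hD]
    abel

lemma blocksum (A : Matrix (Fin n) (Fin n) ℝ) (B : Matrix (Fin n) (Fin p) ℝ)
    (C : Matrix (Fin m) (Fin n) ℝ) (D : Matrix (Fin m) (Fin p) ℝ)
    (F₁ F₂ : Matrix (Fin p) (Fin n) ℝ) (s lv jv : ℕ) (hl : lv < s) (hj : jv < s + n) :
    ∑ j ∈ Finset.range (s+n), Nblk A B C D F₂ ((n:ℤ) + (lv:ℤ) - (j:ℤ)) * Vblk A B F₁ F₂ ((j:ℤ) - (jv:ℤ))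
      = Nblk A B C D F₁ ((n:ℤ) + (lv:ℤ) - (jv:ℤ)) := by
  by_cases hle : jv ≤ n + lv
  · set K := n + lv - jv with hK
    have hsub : Finset.Ico jv (jv + K + 1) ⊆ Finset.range (s+n) := by
      intro x hx
      simp only [Finset.mem_Ico, Finset.mem_range] at *
      omega
    have hzero : ∀ x ∈ Finset.range (s+n), x ∉ Finset.Ico jv (jv + K + 1) →
        Nblk A B C D F₂ ((n:ℤ) + (lv:ℤ) - (x:ℤ)) * Vblk A B F₁ F₂ ((x:ℤ) - (jv:ℤ)) = 0 := by
      intro x _ hx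
      simp only [Finset.mem_Ico, not_and_or, not_le] at hx
      rcases hx with hx | hx
      · rw [Vblk, if_neg (by omega), if_neg (by omega), Matrix.mul_zero]
      · rw [Nblk, if_neg (by omega), if_neg (by omega), Matrix.zero_mul]
    rw [← Finset.sum_subset hsub hzero, Finset.sum_Ico_eq_sum_range]
    have hcut : jv + K + 1 - jv = K + 1 := by omega
    rw [hcut]
    have hterm : ∀ t ∈ Finset.range (K+1),
        Nblk A B C D F₂ ((n:ℤ) + (lv:ℤ) - ((jv + t : ℕ):ℤ)) * Vblk A B F₁ F₂ (((jv + t : ℕ):ℤ) - (jv:ℤ))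
          = Nblk A B C D F₂ ((K:ℤ) - (t:ℤ)) * Vblk A B F₁ F₂ (t:ℤ) := by
      intro t _
      have e1 : (n:ℤ) + (lv:ℤ) - ((jv + t : ℕ):ℤ) = (K:ℤ) - (t:ℤ) := by push_cast; omega
      have e2 : ((jv + t : ℕ):ℤ) - (jv:ℤ) = (t:ℤ) := by push_cast; omega
      rw [e1, e2]
    rw [Finset.sum_congr rfl hterm, core]
    have e3 : (n:ℤ) + (lv:ℤ) - (jv:ℤ) = (K:ℤ) := by omega
    rw [e3]
  · have hR : Nblk A B C D F₁ ((n:ℤ) + (lv:ℤ) - (jv:ℤ)) = 0 := by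
      rw [Nblk, if_neg (by omega), if_neg (by omega)]
    rw [hR]
    apply Finset.sum_eq_zero
    intro j hj2
    simp only [Finset.mem_range] at hj2
    by_cases hjl : j ≤ n + lv
    · rw [Vblk, if_neg (by omega), if_neg (by omega), Matrix.mul_zero]
    · rw [Nblk, if_neg (by omega), if_neg (by omega), Matrix.zero_mul]


/-- `N₂ V = N₁`. -/
theorem NToeplitz_mul_VToeplitz {n p m : ℕ} (s : ℕ) (A : Matrix (Fin n) (Fin n) ℝ)
    (B : Matrix (Fin n) (Fin p) ℝ) (C : Matrix (Fin m) (Fin n) ℝ)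
    (D : Matrix (Fin m) (Fin p) ℝ) (F₁ F₂ : Matrix (Fin p) (Fin n) ℝ) :
    NToeplitz s A B C D F₂ * VToeplitz s A B F₁ F₂ = NToeplitz s A B C D F₁ := by
  ext ⟨l, a⟩ ⟨j', b⟩
  rw [Matrix.mul_apply, Fintype.sum_prod_type]
  simp only [NToeplitz, VToeplitz]
  simp only [← Matrix.mul_apply]
  rw [← Matrix.sum_apply]
  rw [Fin.sum_univ_eq_sum_range
    (fun jv => Nblk A B C D F₂ ((n:ℤ) + ((l:ℕ):ℤ) - (jv:ℤ)) * Vblk A B F₁ F₂ ((jv:ℤ) - ((j':ℕ):ℤ)))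
    (s+n)]
  rw [blocksum A B C D F₁ F₂ s l j' l.isLt j'.isLt]
end

section
/- Let U = [U₁, U₂] ∈ ℝ^{N×N} be orthogonal with U₁ ∈ ℝ^{N×γ}, and let P ∈ ℝ^{N×γ} have orthonormal columns. Then min over Q ∈ ℝ^{γ×γ} of ‖P − U₁ Q‖₂ equals ‖U₂ᵀ P‖₂, attained at Q = U₁ᵀ P. -/
open Matrix
open scoped Matrix.Norms.L2Operator

lemma l2_opNorm_one_le (k : Type*) [Fintype k] [DecidableEq k] :
    ‖(1 : Matrix k k ℝ)‖ ≤ 1 := by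
  rw [Matrix.l2_opNorm_def]
  have h : (Matrix.toEuclideanLin.trans LinearMap.toContinuousLinearMap) (1 : Matrix k k ℝ)
      = ContinuousLinearMap.id ℝ (EuclideanSpace ℝ k) := by
    ext x
    simp [Matrix.toEuclideanLin_apply]
  rw [h]
  exact ContinuousLinearMap.norm_id_le

/-- For an orthogonal `U = [U₁, U₂]` and `P` with orthonormal columns,
`min_Q ‖P − U₁ Q‖₂ = ‖U₂ᵀ P‖₂`, attained at `Q = U₁ᵀ P`. -/
theorem min_dist_to_column_space {N γ : ℕ} (hγ : γ ≤ N)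
    (U₁ : Matrix (Fin N) (Fin γ) ℝ) (U₂ : Matrix (Fin N) (Fin (N - γ)) ℝ)
    (hUl : (Matrix.fromCols U₁ U₂)ᵀ * Matrix.fromCols U₁ U₂ = 1)
    (hUr : Matrix.fromCols U₁ U₂ * (Matrix.fromCols U₁ U₂)ᵀ = 1)
    (P : Matrix (Fin N) (Fin γ) ℝ) (hP : Pᵀ * P = 1) :
    IsLeast {x : ℝ | ∃ Q : Matrix (Fin γ) (Fin γ) ℝ, x = ‖P - U₁ * Q‖} ‖U₂ᵀ * P‖ ∧
      ‖P - U₁ * (U₁ᵀ * P)‖ = ‖U₂ᵀ * P‖ := by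
  -- extract block identities
  rw [Matrix.transpose_fromCols, Matrix.fromRows_mul_fromCols] at hUl
  rw [← Matrix.fromBlocks_one] at hUl
  have h11 : U₁ᵀ * U₁ = 1 := by
    have := congrArg Matrix.toBlocks₁₁ hUl; simpa [-Matrix.fromBlocks_one] using this
  have h21 : U₂ᵀ * U₁ = 0 := by
    have := congrArg Matrix.toBlocks₂₁ hUl; simpa [-Matrix.fromBlocks_one] using this
  have h22 : U₂ᵀ * U₂ = 1 := by
    have := congrArg Matrix.toBlocks₂₂ hUl; simpa [-Matrix.fromBlocks_one] using this
  rw [Matrix.transpose_fromCols, Matrix.fromCols_mul_fromRows] at hUr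
  -- norms of U₁, U₂ and their transposes are ≤ 1
  have hnU₂ : ‖U₂‖ ≤ 1 := by
    have h := Matrix.l2_opNorm_conjTranspose_mul_self U₂
    rw [show U₂ᴴ = U₂ᵀ from rfl, h22] at h
    nlinarith [norm_nonneg U₂, l2_opNorm_one_le (Fin (N - γ))]
  have hnU₂t : ‖U₂ᵀ‖ ≤ 1 := by
    rw [show U₂ᵀ = U₂ᴴ from rfl, Matrix.l2_opNorm_conjTranspose]; exact hnU₂
  -- lower bound: for every Q, ‖U₂ᵀP‖ ≤ ‖P - U₁ Q‖
  have key : ∀ Q : Matrix (Fin γ) (Fin γ) ℝ, ‖U₂ᵀ * P‖ ≤ ‖P - U₁ * Q‖ := by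
    intro Q
    have h1 : U₂ᵀ * (P - U₁ * Q) = U₂ᵀ * P := by
      rw [Matrix.mul_sub, ← Matrix.mul_assoc, h21, Matrix.zero_mul, sub_zero]
    calc ‖U₂ᵀ * P‖ = ‖U₂ᵀ * (P - U₁ * Q)‖ := by rw [h1]
      _ ≤ ‖U₂ᵀ‖ * ‖P - U₁ * Q‖ := Matrix.l2_opNorm_mul _ _
      _ ≤ 1 * ‖P - U₁ * Q‖ := by
          exact mul_le_mul_of_nonneg_right hnU₂t (norm_nonneg _)
      _ = ‖P - U₁ * Q‖ := one_mul _
  -- attainment at Q = U₁ᵀ P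
  have hatt : ‖P - U₁ * (U₁ᵀ * P)‖ = ‖U₂ᵀ * P‖ := by
    have hM : P - U₁ * (U₁ᵀ * P) = U₂ * (U₂ᵀ * P) := by
      have : U₁ * (U₁ᵀ * P) + U₂ * (U₂ᵀ * P) = P := by
        rw [← Matrix.mul_assoc, ← Matrix.mul_assoc, ← Matrix.add_mul, hUr, Matrix.one_mul]
      exact sub_eq_iff_eq_add'.mpr this.symm
    refine le_antisymm ?_ (key _)
    calc ‖P - U₁ * (U₁ᵀ * P)‖ = ‖U₂ * (U₂ᵀ * P)‖ := by rw [hM]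
      _ ≤ ‖U₂‖ * ‖U₂ᵀ * P‖ := Matrix.l2_opNorm_mul _ _
      _ ≤ 1 * ‖U₂ᵀ * P‖ := mul_le_mul_of_nonneg_right hnU₂ (norm_nonneg _)
      _ = ‖U₂ᵀ * P‖ := one_mul _
  refine ⟨⟨⟨U₁ᵀ * P, hatt.symm⟩, ?_⟩, hatt⟩
  rintro x ⟨Q, rfl⟩
  exact key Q
end

section
/- Let S₁, S₂ ∈ ℝ^{N×N} be symmetric, S = S₁ + S₂, with S₁ positive semidefinite of rank γ. Let U₁ span the top-γ eigenspace of S and V₁ span the range of S₁ (column space, an invariant subspace of S₁ for its nonzero eigenvalues). If λ_γ(S₁) > 2‖S₂‖₂ then ‖V₁V₁ᵀ − U₁U₁ᵀ‖₂ ≤ ‖S₂‖₂ / (λ_γ(S₁) − 2‖S₂‖₂) (a Davis–Kahan-type bound on the projection difference). -/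
open Matrix
open scoped Matrix.Norms.L2Operator

/-- `eigDesc v k` is the `k`-th largest entry of `v` (0-based). -/
noncomputable def eigDesc {N : ℕ} (v : Fin N → ℝ) (k : Fin N) : ℝ :=
  (v ∘ Tuple.sort v) k.rev

set_option maxHeartbeats 1600000

noncomputable section
variable {m n l : ℕ}

/-- view a plain vector as an element of Euclidean space -/
def En {n : ℕ} (v : Fin n → ℝ) : EuclideanSpace ℝ (Fin n) := (WithLp.equiv 2 _).symm v

lemma En_inner (v w : Fin n → ℝ) : inner ℝ (En v) (En w) = v ⬝ᵥ w := by
  simp [En, PiLp.inner_apply, RCLike.inner_apply, dotProduct, mul_comm]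

lemma En_norm_sq (v : Fin n → ℝ) : ‖En v‖ ^ 2 = v ⬝ᵥ v := by
  rw [← En_inner, real_inner_self_eq_norm_sq]

lemma En_add (v w : Fin n → ℝ) : En (v + w) = En v + En w := rfl
lemma En_sub (v w : Fin n → ℝ) : En (v - w) = En v - En w := rfl
lemma En_zero : En (0 : Fin n → ℝ) = 0 := rfl
lemma En_inj : Function.Injective (En (n := n)) := (WithLp.equiv 2 _).symm.injective

lemma mulVec_norm_le (A : Matrix (Fin m) (Fin n) ℝ) (v : Fin n → ℝ) :
    ‖En (A *ᵥ v)‖ ≤ ‖A‖ * ‖En v‖ := by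
  simpa [En] using A.l2_opNorm_mulVec (En v)

lemma opNorm_le_of_forall (A : Matrix (Fin m) (Fin n) ℝ) {c : ℝ} (hc : 0 ≤ c)
    (h : ∀ v : Fin n → ℝ, ‖En (A *ᵥ v)‖ ≤ c * ‖En v‖) : ‖A‖ ≤ c := by
  rw [Matrix.l2_opNorm_def]
  refine ContinuousLinearMap.opNorm_le_bound _ hc fun x => ?_
  simpa [En, Matrix.toEuclideanLin_apply] using h x

lemma opNorm_transpose (A : Matrix (Fin m) (Fin n) ℝ) : ‖Aᵀ‖ = ‖A‖ := by
  rw [← Matrix.conjTranspose_eq_transpose_of_trivial, Matrix.l2_opNorm_conjTranspose]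


variable {N : ℕ}

lemma eigDesc_antitone {N : ℕ} (v : Fin N → ℝ) : Antitone (eigDesc v) := by
  intro k k' hk
  exact Tuple.monotone_sort v (Fin.rev_le_rev.mpr hk)

lemma eigDesc_min_nonzero {N γ : ℕ} (hγ0 : 0 < γ) (hγ : γ ≤ N) (hN : 0 < N)
    (d : Fin N → ℝ) (hd : ∀ i, 0 ≤ d i)
    (hcard : Fintype.card {i // d i ≠ 0} = γ) :
    ∀ i, d i ≠ 0 → eigDesc d ⟨γ - 1, by omega⟩ ≤ d i := by
  classical
  set σ := Tuple.sort d with hσ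
  have hmono : Monotone (d ∘ σ) := Tuple.monotone_sort d
  set F : Finset (Fin N) := Finset.univ.filter (fun j => d (σ j) ≠ 0) with hF
  have hcardF : F.card = γ := by
    have e : {j // d (σ j) ≠ 0} ≃ {i // d i ≠ 0} := σ.subtypeEquiv (fun j => Iff.rfl)
    rw [← hcard, ← Fintype.card_congr e, Fintype.card_subtype]
  have hup : ∀ ⦃j j' : Fin N⦄, j ≤ j' → j ∈ F → j' ∈ F := by
    intro j j' hjj hj
    simp only [hF, Finset.mem_filter, Finset.mem_univ, true_and] at hj ⊢
    have h1 : 0 < d (σ j) := lt_of_le_of_ne (hd _) (Ne.symm hj)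
    have := hmono hjj
    simp only [Function.comp] at this
    exact (lt_of_lt_of_le h1 this).ne'
  set t : Fin N := (⟨γ - 1, by omega⟩ : Fin N).rev with ht
  have htv : (t : ℕ) = N - γ := by simp [ht, Fin.rev]; omega
  have htF : t ∈ F := by
    by_contra htF
    have hsub : F ⊆ Finset.Ioi t := by
      intro j hj
      simp only [Finset.mem_Ioi]
      by_contra hle
      exact htF (hup (not_lt.mp hle) hj)
    have := Finset.card_le_card hsub
    rw [hcardF, Fin.card_Ioi, htv] at this
    omega
  have hge : ∀ j ∈ F, t ≤ j := by
    intro j hj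
    by_contra hlt
    have hsub : Finset.Ici j ⊆ F := fun j' hj' => hup (Finset.mem_Ici.mp hj') hj
    have := Finset.card_le_card hsub
    rw [hcardF, Fin.card_Ici] at this
    have : (j : ℕ) < N - γ := by rw [← htv]; exact not_le.mp hlt
    omega
  intro i hi
  have hiF : σ.symm i ∈ F := by
    simp [hF, Equiv.apply_symm_apply, hi]
  have : d (σ t) ≤ d (σ (σ.symm i)) := hmono (hge _ hiF)
  rw [Equiv.apply_symm_apply] at this
  exact this

lemma En_coe (X : EuclideanSpace ℝ (Fin N)) : En (⇑X) = X := rfl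

lemma dot_mulVec_symm {A : Matrix (Fin N) (Fin N) ℝ} (h : A.IsHermitian)
    (v w : Fin N → ℝ) : v ⬝ᵥ (A *ᵥ w) = (A *ᵥ v) ⬝ᵥ w := by
  have hA : Aᵀ = A := by
    rw [← Matrix.conjTranspose_eq_transpose_of_trivial]; exact h
  rw [Matrix.dotProduct_mulVec, ← Matrix.mulVec_transpose, hA]

lemma parseval (B : OrthonormalBasis (Fin N) ℝ (EuclideanSpace ℝ (Fin N)))
    (X Y : EuclideanSpace ℝ (Fin N)) :
    (inner ℝ X Y : ℝ) = ∑ i, (B.repr X i) * (B.repr Y i) := by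
  rw [← B.repr.inner_map_map X Y, PiLp.inner_apply]
  simp only [RCLike.inner_apply, conj_trivial]
  exact Finset.sum_congr rfl fun i _ => mul_comm _ _

lemma repr_eq_dot (B : OrthonormalBasis (Fin N) ℝ (EuclideanSpace ℝ (Fin N)))
    (x : Fin N → ℝ) (i : Fin N) : B.repr (En x) i = ⇑(B i) ⬝ᵥ x := by
  rw [B.repr_apply_apply]
  exact En_inner (⇑(B i)) x

lemma quad_lower {N γ : ℕ} (hγ0 : 0 < γ) (hγ : γ ≤ N) (hN : 0 < N)
    {S₁ : Matrix (Fin N) (Fin N) ℝ} (h1 : S₁.IsHermitian) (hpsd : S₁.PosSemidef)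
    (hrank : S₁.rank = γ) (x : Fin N → ℝ) (hx : x ∈ LinearMap.range S₁.mulVecLin) :
    eigDesc h1.eigenvalues ⟨γ - 1, by omega⟩ * (x ⬝ᵥ x) ≤ x ⬝ᵥ (S₁ *ᵥ x) := by
  classical
  obtain ⟨y, hy⟩ := hx
  rw [Matrix.mulVecLin_apply] at hy
  set B := h1.eigenvectorBasis with hB
  set d := h1.eigenvalues with hd
  set lam := eigDesc h1.eigenvalues ⟨γ - 1, by omega⟩ with hlam
  have hdnn : ∀ i, 0 ≤ d i := hpsd.eigenvalues_nonneg
  have hcard : Fintype.card {i // d i ≠ 0} = γ := by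
    rw [← h1.rank_eq_card_non_zero_eigs, hrank]
  have hmin := eigDesc_min_nonzero hγ0 hγ hN d hdnn hcard
  have hrX : ∀ i, B.repr (En x) i = d i * (⇑(B i) ⬝ᵥ y) := by
    intro i
    rw [repr_eq_dot, ← hy, dot_mulVec_symm h1, h1.mulVec_eigenvectorBasis,
      smul_dotProduct]
    rfl
  have hrSx : ∀ i, B.repr (En (S₁ *ᵥ x)) i = d i * (B.repr (En x) i) := by
    intro i
    rw [repr_eq_dot, dot_mulVec_symm h1, h1.mulVec_eigenvectorBasis, smul_dotProduct,
      repr_eq_dot]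
    rfl
  have e1 : x ⬝ᵥ x = ∑ i, (B.repr (En x) i) ^ 2 := by
    rw [← En_inner, parseval B]
    exact Finset.sum_congr rfl fun i _ => (sq _).symm
  have e2 : x ⬝ᵥ (S₁ *ᵥ x) = ∑ i, d i * (B.repr (En x) i) ^ 2 := by
    rw [← En_inner, parseval B]
    refine Finset.sum_congr rfl fun i _ => ?_
    rw [hrSx i]; ring
  rw [e1, e2, Finset.mul_sum]
  refine Finset.sum_le_sum fun i _ => ?_
  by_cases hdi : d i = 0
  · have : B.repr (En x) i = 0 := by rw [hrX i, hdi, zero_mul]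
    simp [this]
  · exact mul_le_mul_of_nonneg_right (hmin i hdi) (sq_nonneg _)

lemma En_sum {n : ℕ} {ι : Type*} (s : Finset ι) (v : ι → (Fin n → ℝ)) :
    En (∑ p ∈ s, v p) = ∑ p ∈ s, En (v p) :=
  map_sum (WithLp.linearEquiv 2 ℝ (Fin n → ℝ)).symm v s


lemma weyl_lower {N γ : ℕ} (hγ0 : 0 < γ) (hγN : γ + 1 ≤ N)
    {S₁ S₂ : Matrix (Fin N) (Fin N) ℝ} (h1 : S₁.IsHermitian) (hS : (S₁ + S₂).IsHermitian)
    (hpsd : S₁.PosSemidef) (hrank : S₁.rank = γ) :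
    eigDesc h1.eigenvalues ⟨γ - 1, by omega⟩ - ‖S₂‖ ≤
      eigDesc hS.eigenvalues ⟨γ - 1, by omega⟩ := by
  classical
  set κ := hS.eigenvalues with hκ
  set BS := hS.eigenvectorBasis with hBS
  set σk := Tuple.sort κ with hσk
  set t : Fin N := ⟨γ - 1, by omega⟩ with htdef
  set m := eigDesc κ t with hm
  set lam := eigDesc h1.eigenvalues t with hlamdef
  set g : Set.Ici t → Fin N := fun p => σk ((p : Fin N).rev) with hg
  have hginj : Function.Injective g := by
    intro p q h
    exact Subtype.ext (Fin.rev_injective (σk.injective h))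
  set fE : Set.Ici t → EuclideanSpace ℝ (Fin N) := fun p => BS (g p) with hfEdef
  have hfE : Orthonormal ℝ fE := BS.orthonormal.comp g hginj
  set f : Set.Ici t → (Fin N → ℝ) := fun p => ⇑(fE p) with hfdef
  have heval : ∀ p : Set.Ici t, κ (g p) = eigDesc κ (p : Fin N) := fun p => rfl
  have heig : ∀ p, (S₁ + S₂) *ᵥ f p = κ (g p) • f p := fun p =>
    hS.mulVec_eigenvectorBasis (g p)
  -- the span W and the range R
  set W : Submodule ℝ (Fin N → ℝ) := Submodule.span ℝ (Set.range f) with hW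
  set R : Submodule ℝ (Fin N → ℝ) := LinearMap.range S₁.mulVecLin with hR
  have hli : LinearIndependent ℝ f := by
    have := hfE.linearIndependent.map' (WithLp.linearEquiv 2 ℝ (Fin N → ℝ)).toLinearMap
      (LinearEquiv.ker _)
    exact this
  have hfrW : Module.finrank ℝ W = N - (γ - 1) := by
    rw [hW, finrank_span_eq_card hli]
    have : Fintype.card (Set.Ici t) = N - t := by
      rw [← Set.toFinset_card, Set.toFinset_Ici, Fin.card_Ici]
    simp
    rfl
  have hfrR : Module.finrank ℝ R = γ := hrank
  have hfrsup : Module.finrank ℝ (W ⊔ R : Submodule ℝ (Fin N → ℝ)) ≤ N := by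
    refine le_trans (Submodule.finrank_le _) ?_
    simp [Module.finrank_pi]
  have hsum := Submodule.finrank_sup_add_finrank_inf_eq W R
  have hpos : 0 < Module.finrank ℝ (W ⊓ R : Submodule ℝ (Fin N → ℝ)) := by omega
  have hne : (W ⊓ R : Submodule ℝ (Fin N → ℝ)) ≠ ⊥ := by
    intro h
    rw [h, finrank_bot] at hpos
    omega
  obtain ⟨x, hxmem, hxne⟩ := Submodule.exists_mem_ne_zero_of_ne_bot hne
  have hxW : x ∈ W := hxmem.1
  have hxR : x ∈ R := hxmem.2
  -- quadratic form bound on W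
  obtain ⟨c, hc⟩ := (Submodule.mem_span_range_iff_exists_fun ℝ).mp hxW
  have hXE : En x = ∑ p, c p • fE p := by
    rw [← hc, En_sum]
    exact Finset.sum_congr rfl fun p _ => rfl
  have hSx : (S₁ + S₂) *ᵥ x = ∑ p, (c p * κ (g p)) • f p := by
    rw [← hc, ← Matrix.mulVecLin_apply, map_sum]
    refine Finset.sum_congr rfl fun p _ => ?_
    rw [_root_.map_smul, Matrix.mulVecLin_apply, heig p, smul_smul, mul_comm]
  have hESx : En ((S₁ + S₂) *ᵥ x) = ∑ p, (c p * κ (g p)) • fE p := by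
    rw [hSx, En_sum]
    exact Finset.sum_congr rfl fun p _ => rfl
  have hquad : x ⬝ᵥ ((S₁ + S₂) *ᵥ x) ≤ m * (x ⬝ᵥ x) := by
    have e1 : x ⬝ᵥ ((S₁ + S₂) *ᵥ x) = ∑ p, c p * (c p * κ (g p)) := by
      rw [← En_inner, hXE, hESx]
      simpa using hfE.inner_sum c (fun p => c p * κ (g p)) Finset.univ
    have e2 : x ⬝ᵥ x = ∑ p, c p * c p := by
      rw [← En_inner, hXE]
      simpa using hfE.inner_sum c c Finset.univ
    rw [e1, e2, Finset.mul_sum]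
    refine Finset.sum_le_sum fun p _ => ?_
    have hple : eigDesc κ (p : Fin N) ≤ m := by
      rw [hm]
      exact eigDesc_antitone κ p.2
    rw [heval p]
    nlinarith [sq_nonneg (c p), hple]
  -- lower bounds
  have hxx : (0:ℝ) < x ⬝ᵥ x := by
    have h0 : En x ≠ 0 := fun h => hxne (En_inj (by simpa [En_zero] using h))
    have := En_norm_sq x
    nlinarith [norm_pos_iff.mpr h0]
  have hq1 : lam * (x ⬝ᵥ x) ≤ x ⬝ᵥ (S₁ *ᵥ x) :=
    quad_lower hγ0 (Nat.le_of_succ_le hγN) (by omega) h1 hpsd hrank x hxR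
  have hq2 : |x ⬝ᵥ (S₂ *ᵥ x)| ≤ ‖S₂‖ * (x ⬝ᵥ x) := by
    rw [← En_inner]
    calc |(inner ℝ (En x) (En (S₂ *ᵥ x)) : ℝ)| ≤ ‖En x‖ * ‖En (S₂ *ᵥ x)‖ :=
          abs_real_inner_le_norm _ _
      _ ≤ ‖En x‖ * (‖S₂‖ * ‖En x‖) := by
          refine mul_le_mul_of_nonneg_left (mulVec_norm_le S₂ x) (norm_nonneg _)
      _ = ‖S₂‖ * (x ⬝ᵥ x) := by
          rw [← En_norm_sq x]; ring
  have hsplit : x ⬝ᵥ ((S₁ + S₂) *ᵥ x) = x ⬝ᵥ (S₁ *ᵥ x) + x ⬝ᵥ (S₂ *ᵥ x) := by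
    rw [Matrix.add_mulVec, dotProduct_add]
  have habs := abs_le.mp hq2
  have hfin : (lam - ‖S₂‖) * (x ⬝ᵥ x) ≤ m * (x ⬝ᵥ x) := by nlinarith
  have hfin2 : lam - ‖S₂‖ ≤ m := le_of_mul_le_mul_right hfin hxx
  linarith [hfin2]


lemma sq_le_imp_le {a b : ℝ} (ha : 0 ≤ a) (hb : 0 ≤ b) (h : a ^ 2 ≤ b ^ 2) : a ≤ b := by
  nlinarith

lemma dot_orth_cols {n γ : ℕ} {V : Matrix (Fin n) (Fin γ) ℝ} (hV : Vᵀ * V = 1)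
    (c : Fin γ → ℝ) : (V *ᵥ c) ⬝ᵥ (V *ᵥ c) = c ⬝ᵥ c := by
  rw [Matrix.dotProduct_mulVec, ← Matrix.mulVec_transpose, Matrix.mulVec_mulVec, hV,
    Matrix.one_mulVec]

lemma proj_symm {n γ : ℕ} (V : Matrix (Fin n) (Fin γ) ℝ) : (V * Vᵀ)ᵀ = V * Vᵀ := by
  rw [Matrix.transpose_mul, Matrix.transpose_transpose]

lemma proj_idem {n γ : ℕ} {V : Matrix (Fin n) (Fin γ) ℝ} (hV : Vᵀ * V = 1) :
    (V * Vᵀ) * (V * Vᵀ) = V * Vᵀ := by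
  rw [Matrix.mul_assoc, ← Matrix.mul_assoc Vᵀ V Vᵀ, hV, Matrix.one_mul]

lemma proj_dot_self {n γ : ℕ} {V : Matrix (Fin n) (Fin γ) ℝ} (hV : Vᵀ * V = 1)
    (v : Fin n → ℝ) :
    ((V * Vᵀ) *ᵥ v) ⬝ᵥ ((V * Vᵀ) *ᵥ v) = v ⬝ᵥ ((V * Vᵀ) *ᵥ v) := by
  rw [Matrix.dotProduct_mulVec, ← Matrix.mulVec_transpose, Matrix.mulVec_mulVec, proj_symm,
    proj_idem hV, Matrix.dotProduct_mulVec, ← Matrix.mulVec_transpose, proj_symm]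

lemma proj_pyth {n γ : ℕ} {V : Matrix (Fin n) (Fin γ) ℝ} (hV : Vᵀ * V = 1)
    (v : Fin n → ℝ) :
    ((1 - V * Vᵀ) *ᵥ v) ⬝ᵥ ((1 - V * Vᵀ) *ᵥ v) + ((V * Vᵀ) *ᵥ v) ⬝ᵥ ((V * Vᵀ) *ᵥ v)
      = v ⬝ᵥ v := by
  have h1 : (1 - V * Vᵀ) *ᵥ v = v - (V * Vᵀ) *ᵥ v := by
    rw [Matrix.sub_mulVec, Matrix.one_mulVec]
  have h2 := proj_dot_self hV v
  have h3 : ((V * Vᵀ) *ᵥ v) ⬝ᵥ v = v ⬝ᵥ ((V * Vᵀ) *ᵥ v) := dotProduct_comm _ _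
  rw [h1, sub_dotProduct, dotProduct_sub, dotProduct_sub]
  linarith

/-- Davis–Kahan-type bound: if `S = S₁ + S₂` with `S₁` symmetric PSD of rank `γ`,
`V₁` an orthonormal basis of the range of `S₁`, `U₁` an orthonormal basis of the top-`γ`
eigenspace of `S`, and `λ_γ(S₁) > 2‖S₂‖`, then
`‖V₁V₁ᵀ − U₁U₁ᵀ‖₂ ≤ ‖S₂‖ / (λ_γ(S₁) − 2‖S₂‖)`. -/
theorem davis_kahan_projection_bound {N γ : ℕ} (hγ0 : 0 < γ) (hγ : γ < N)
    (S₁ S₂ : Matrix (Fin N) (Fin N) ℝ)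
    (h1 : S₁.IsHermitian) (h2 : S₂.IsHermitian) (hS : (S₁ + S₂).IsHermitian)
    (hpsd : S₁.PosSemidef) (hrank : S₁.rank = γ)
    (V₁ U₁ : Matrix (Fin N) (Fin γ) ℝ)
    (hV₁o : V₁ᵀ * V₁ = 1) (hU₁o : U₁ᵀ * U₁ = 1)
    (hV : LinearMap.range V₁.mulVecLin = LinearMap.range S₁.mulVecLin)
    (μ : Fin γ → ℝ)
    (hU : (S₁ + S₂) * U₁ = U₁ * Matrix.diagonal μ)
    (hμ : ∀ i : Fin γ, μ i = eigDesc hS.eigenvalues (Fin.castLE hγ.le i))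
    (hgap : 2 * ‖S₂‖ < eigDesc h1.eigenvalues ⟨γ - 1, by omega⟩) :
    ‖V₁ * V₁ᵀ - U₁ * U₁ᵀ‖ ≤
      ‖S₂‖ / (eigDesc h1.eigenvalues ⟨γ - 1, by omega⟩ - 2 * ‖S₂‖) := by
  classical
  set ε := ‖S₂‖ with hε
  have hε0 : 0 ≤ ε := norm_nonneg _
  set lam := eigDesc h1.eigenvalues ⟨γ - 1, by omega⟩ with hlam
  have hlampos : 0 < lam := by linarith
  obtain ⟨P, hP⟩ : ∃ M, M = V₁ * V₁ᵀ := ⟨_, rfl⟩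
  obtain ⟨Q, hQ⟩ : ∃ M, M = U₁ * U₁ᵀ := ⟨_, rfl⟩
  rw [← hP, ← hQ]
  set b' := ε / (lam - ε) with hb'
  have hlamε : 0 < lam - ε := by linarith
  have hb'0 : 0 ≤ b' := div_nonneg hε0 hlamε.le
  have hb'1 : b' < 1 := by
    rw [hb', div_lt_one hlamε]; linarith
  -- (2) eigenvalue lower bound for μ
  have hμlow : ∀ i : Fin γ, lam - ε ≤ μ i := by
    intro i
    have hw := weyl_lower hγ0 hγ h1 hS hpsd hrank
    have hanti : eigDesc hS.eigenvalues ⟨γ - 1, by omega⟩ ≤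
        eigDesc hS.eigenvalues (Fin.castLE hγ.le i) := by
      refine eigDesc_antitone _ ?_
      simp only [Fin.le_def, Fin.castLE]
      omega
    rw [hμ i]
    exact le_trans (by linarith [hw]) hanti
  have hμpos : ∀ i : Fin γ, 0 < μ i := fun i => lt_of_lt_of_le (by linarith) (hμlow i)
  -- (1) P * S₁ = S₁
  have hPS₁ : P * S₁ = S₁ := by
    ext i j
    have hcol : S₁ *ᵥ Pi.single j 1 ∈ LinearMap.range V₁.mulVecLin := by
      rw [hV]; exact ⟨Pi.single j 1, rfl⟩
    obtain ⟨w, hw⟩ := hcol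
    rw [Matrix.mulVecLin_apply] at hw
    have : (P * S₁) *ᵥ Pi.single j 1 = S₁ *ᵥ Pi.single j 1 := by
      rw [← Matrix.mulVec_mulVec, ← hw, Matrix.mulVec_mulVec, hP, Matrix.mul_assoc, hV₁o,
        Matrix.mul_one]
    have h' := congrFun this i
    simpa [Matrix.mulVec_single] using h'
  -- (3) key equation
  have hPS : (1 - P) * S₁ = 0 := by rw [Matrix.sub_mul, Matrix.one_mul, hPS₁, sub_self]
  obtain ⟨Y, hYdef⟩ : ∃ M, M = U₁ - P * U₁ := ⟨_, rfl⟩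
  have hYdiag : Y * Matrix.diagonal μ = (1 - P) * S₂ * U₁ := by
    rw [hYdef]
    calc (U₁ - P * U₁) * Matrix.diagonal μ
        = ((1 - P) * U₁) * Matrix.diagonal μ := by
          conv_rhs => rw [Matrix.sub_mul, Matrix.one_mul]
      _ = (1 - P) * (U₁ * Matrix.diagonal μ) := Matrix.mul_assoc _ _ _
      _ = (1 - P) * ((S₁ + S₂) * U₁) := by rw [hU]
      _ = ((1 - P) * (S₁ + S₂)) * U₁ := (Matrix.mul_assoc _ _ _).symm
      _ = ((1 - P) * S₁ + (1 - P) * S₂) * U₁ := by rw [Matrix.mul_add]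
      _ = ((1 - P) * S₂) * U₁ := by rw [hPS, zero_add]
      _ = (1 - P) * S₂ * U₁ := rfl
  -- norms of pieces
  have hU₁n : ‖U₁‖ ≤ 1 := by
    refine opNorm_le_of_forall U₁ zero_le_one fun c => ?_
    rw [one_mul]
    refine sq_le_imp_le (norm_nonneg _) (norm_nonneg _) ?_
    rw [En_norm_sq, En_norm_sq, dot_orth_cols hU₁o]
  have hV₁n : ‖V₁‖ ≤ 1 := by
    refine opNorm_le_of_forall V₁ zero_le_one fun c => ?_
    rw [one_mul]
    refine sq_le_imp_le (norm_nonneg _) (norm_nonneg _) ?_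
    rw [En_norm_sq, En_norm_sq, dot_orth_cols hV₁o]
  have h1Pn : ‖(1 : Matrix (Fin N) (Fin N) ℝ) - P‖ ≤ 1 := by
    refine opNorm_le_of_forall _ zero_le_one fun v => ?_
    rw [one_mul]
    refine sq_le_imp_le (norm_nonneg _) (norm_nonneg _) ?_
    rw [En_norm_sq, En_norm_sq]
    have := proj_pyth hV₁o v
    have hge : (0:ℝ) ≤ ((V₁ * V₁ᵀ) *ᵥ v) ⬝ᵥ ((V₁ * V₁ᵀ) *ᵥ v) := by
      rw [← En_norm_sq]; positivity
    rw [hP]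
    linarith
  have h1Qn : ‖(1 : Matrix (Fin N) (Fin N) ℝ) - Q‖ ≤ 1 := by
    refine opNorm_le_of_forall _ zero_le_one fun v => ?_
    rw [one_mul]
    refine sq_le_imp_le (norm_nonneg _) (norm_nonneg _) ?_
    rw [En_norm_sq, En_norm_sq]
    have := proj_pyth hU₁o v
    have hge : (0:ℝ) ≤ ((U₁ * U₁ᵀ) *ᵥ v) ⬝ᵥ ((U₁ * U₁ᵀ) *ᵥ v) := by
      rw [← En_norm_sq]; positivity
    rw [hQ]
    linarith
  -- (5) the Y bound
  have hR2 : ‖(1 - P) * S₂ * U₁‖ ≤ ε := by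
    calc ‖(1 - P) * S₂ * U₁‖ ≤ ‖(1 - P) * S₂‖ * ‖U₁‖ := Matrix.l2_opNorm_mul _ _
      _ ≤ (‖(1 - P : Matrix (Fin N) (Fin N) ℝ)‖ * ‖S₂‖) * ‖U₁‖ := by
          refine mul_le_mul_of_nonneg_right (Matrix.l2_opNorm_mul _ _) (norm_nonneg _)
      _ ≤ (1 * ε) * 1 := by
          refine mul_le_mul ?_ hU₁n (norm_nonneg _) (by positivity)
          exact mul_le_mul_of_nonneg_right h1Pn hε0
      _ = ε := by ring
  have hYn : ‖Y‖ ≤ b' := by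
    refine opNorm_le_of_forall Y hb'0 fun c => ?_
    set dv : Fin γ → ℝ := fun i => c i / μ i with hdv
    have hdiag : Matrix.diagonal μ *ᵥ dv = c := by
      funext i
      rw [Matrix.mulVec_diagonal]
      field_simp [hdv, (hμpos i).ne']
      simp only [hdv]
      field_simp [(hμpos i).ne']
    have hYc : Y *ᵥ c = ((1 - P) * S₂ * U₁) *ᵥ dv := by
      rw [← hYdiag, ← Matrix.mulVec_mulVec, hdiag]
    have hdvn : ‖En dv‖ ≤ ‖En c‖ / (lam - ε) := by
      refine sq_le_imp_le (norm_nonneg _) (by positivity) ?_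
      rw [En_norm_sq, div_pow, En_norm_sq, le_div_iff₀ (by positivity)]
      unfold dotProduct
      rw [Finset.sum_mul]
      refine Finset.sum_le_sum fun i _ => ?_
      have hμi := hμpos i
      have h2 : (lam - ε) ^ 2 ≤ μ i ^ 2 := by nlinarith [hμlow i]
      have h1 : dv i * dv i = c i ^ 2 / μ i ^ 2 := by
        simp only [hdv]
        rw [div_mul_div_comm, ← pow_two, ← pow_two]
      rw [h1, div_mul_eq_mul_div, div_le_iff₀ (by positivity)]
      nlinarith [sq_nonneg (c i)]
    calc ‖En (Y *ᵥ c)‖ = ‖En (((1 - P) * S₂ * U₁) *ᵥ dv)‖ := by rw [hYc]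
      _ ≤ ‖(1 - P) * S₂ * U₁‖ * ‖En dv‖ := mulVec_norm_le _ _
      _ ≤ ε * (‖En c‖ / (lam - ε)) := by
          refine mul_le_mul hR2 hdvn (norm_nonneg _) hε0
      _ = b' * ‖En c‖ := by rw [hb']; ring
  -- (6)-(8): singular value transfer
  obtain ⟨B, hB⟩ : ∃ M, M = V₁ᵀ * U₁ := ⟨_, rfl⟩
  set β := Real.sqrt (1 - b' ^ 2) with hβ
  have hβsq : β ^ 2 = 1 - b' ^ 2 := Real.sq_sqrt (by nlinarith)
  have hβpos : 0 < β := Real.sqrt_pos.mpr (by nlinarith)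
  have hBlow : ∀ d : Fin γ → ℝ, β ^ 2 * (d ⬝ᵥ d) ≤ (B *ᵥ d) ⬝ᵥ (B *ᵥ d) := by
    intro d
    have hpy := proj_pyth hV₁o (U₁ *ᵥ d)
    rw [← hP] at hpy
    have hPv : P *ᵥ (U₁ *ᵥ d) = V₁ *ᵥ (B *ᵥ d) := by
      calc P *ᵥ (U₁ *ᵥ d) = (P * U₁) *ᵥ d := Matrix.mulVec_mulVec _ _ _
        _ = (V₁ * B) *ᵥ d := by rw [hP, hB, Matrix.mul_assoc]
        _ = V₁ *ᵥ (B *ᵥ d) := (Matrix.mulVec_mulVec _ _ _).symm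
    have h1v : (1 - P) *ᵥ (U₁ *ᵥ d) = Y *ᵥ d := by
      calc (1 - P) *ᵥ (U₁ *ᵥ d) = ((1 - P) * U₁) *ᵥ d := Matrix.mulVec_mulVec _ _ _
        _ = Y *ᵥ d := by rw [Matrix.sub_mul, Matrix.one_mul, ← hYdef]
    rw [hPv, h1v, dot_orth_cols hU₁o, dot_orth_cols hV₁o] at hpy
    have hYd : (Y *ᵥ d) ⬝ᵥ (Y *ᵥ d) ≤ b' ^ 2 * (d ⬝ᵥ d) := by
      have := mulVec_norm_le Y d
      have h2 : ‖En (Y *ᵥ d)‖ ≤ b' * ‖En d‖ :=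
        le_trans this (mul_le_mul_of_nonneg_right hYn (norm_nonneg _))
      have h3 : ‖En (Y *ᵥ d)‖ ^ 2 ≤ (b' * ‖En d‖) ^ 2 := by
        nlinarith [norm_nonneg (En (Y *ᵥ d))]
      rw [En_norm_sq] at h3
      calc (Y *ᵥ d) ⬝ᵥ (Y *ᵥ d) ≤ (b' * ‖En d‖) ^ 2 := h3
        _ = b' ^ 2 * (d ⬝ᵥ d) := by rw [mul_pow, En_norm_sq]
    rw [hβsq]
    linarith
  have hdotpos : ∀ {k : ℕ} (u : Fin k → ℝ), u ≠ 0 → 0 < u ⬝ᵥ u := by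
    intro k u hu
    have h0 : En u ≠ 0 := fun h => hu (En_inj (by simpa [En_zero] using h))
    have := En_norm_sq u
    nlinarith [norm_pos_iff.mpr h0]
  have hdotnn : ∀ {k : ℕ} (u : Fin k → ℝ), 0 ≤ u ⬝ᵥ u := by
    intro k u
    rw [← En_norm_sq]; positivity
  have hBinj : Function.Injective B.mulVecLin := by
    rw [← LinearMap.ker_eq_bot]
    rw [LinearMap.ker_eq_bot']
    intro d hd
    rw [Matrix.mulVecLin_apply] at hd
    by_contra hne
    have := hBlow d
    rw [hd] at this
    simp only [zero_dotProduct] at this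
    nlinarith [mul_pos (pow_pos hβpos 2) (hdotpos d hne)]
  have hBsurj : Function.Surjective B.mulVecLin :=
    (LinearMap.injective_iff_surjective).mp hBinj
  have hBtlow : ∀ c : Fin γ → ℝ, β * ‖En c‖ ≤ ‖En (Bᵀ *ᵥ c)‖ := by
    intro c
    rcases eq_or_ne c 0 with rfl | hc
    · simp [Matrix.mulVec_zero, En_zero]
    obtain ⟨x, hx⟩ := hBsurj c
    rw [Matrix.mulVecLin_apply] at hx
    have hcs : c ⬝ᵥ c ≤ ‖En x‖ * ‖En (Bᵀ *ᵥ c)‖ := by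
      have hxc : x ⬝ᵥ (Bᵀ *ᵥ c) = c ⬝ᵥ c := by
        rw [Matrix.dotProduct_mulVec, ← Matrix.mulVec_transpose, Matrix.transpose_transpose,
          hx]
      calc c ⬝ᵥ c = inner ℝ (En x) (En (Bᵀ *ᵥ c)) := by rw [En_inner, hxc]
        _ ≤ ‖En x‖ * ‖En (Bᵀ *ᵥ c)‖ := real_inner_le_norm _ _
    have hux : β * ‖En x‖ ≤ ‖En c‖ := by
      refine sq_le_imp_le (by positivity) (norm_nonneg _) ?_
      rw [mul_pow, En_norm_sq, En_norm_sq, ← hx]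
      exact hBlow x
    have ha : 0 < ‖En c‖ := norm_pos_iff.mpr (fun h => hc (En_inj (by simpa [En_zero] using h)))
    have hcc : c ⬝ᵥ c = ‖En c‖ ^ 2 := (En_norm_sq c).symm
    nlinarith [norm_nonneg (En x), norm_nonneg (En (Bᵀ *ᵥ c)), hβpos]
  -- (9)
  have hQV : ‖(1 - Q) * V₁‖ ≤ b' := by
    refine opNorm_le_of_forall _ hb'0 fun c => ?_
    have hsplitc : ((1 - Q) * V₁) *ᵥ c = (1 - Q) *ᵥ (V₁ *ᵥ c) := by
      rw [Matrix.mulVec_mulVec]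
    have hpy := proj_pyth hU₁o (V₁ *ᵥ c)
    have hQv : (U₁ * U₁ᵀ) *ᵥ (V₁ *ᵥ c) = U₁ *ᵥ (Bᵀ *ᵥ c) := by
      rw [Matrix.mulVec_mulVec, Matrix.mulVec_mulVec, hB, Matrix.transpose_mul,
        Matrix.transpose_transpose, Matrix.mul_assoc]
    rw [hQv, dot_orth_cols hV₁o, dot_orth_cols hU₁o] at hpy
    refine sq_le_imp_le (norm_nonneg _) (by positivity) ?_
    rw [hsplitc, En_norm_sq, mul_pow, En_norm_sq]
    have hBt := hBtlow c
    have hBt2 : (β * ‖En c‖) ^ 2 ≤ ‖En (Bᵀ *ᵥ c)‖ ^ 2 :=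
      pow_le_pow_left₀ (by positivity) hBt 2
    rw [mul_pow, En_norm_sq, En_norm_sq] at hBt2
    rw [← hQ] at hpy
    have hb2 : β ^ 2 * (c ⬝ᵥ c) = (1 - b' ^ 2) * (c ⬝ᵥ c) := by rw [hβsq]
    linarith [hpy, hBt2, hb2]
  -- (10),(11)
  have hM1 : ‖P * (1 - Q)‖ ≤ b' := by
    have htr : (P * (1 - Q))ᵀ = (1 - Q) * P := by
      rw [Matrix.transpose_mul, Matrix.transpose_sub, Matrix.transpose_one, hP, hQ,
        proj_symm, proj_symm]
    rw [← opNorm_transpose, htr]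
    have : (1 - Q) * P = ((1 - Q) * V₁) * V₁ᵀ := by
      rw [hP, Matrix.mul_assoc]
    rw [this]
    calc ‖((1 - Q) * V₁) * V₁ᵀ‖ ≤ ‖(1 - Q) * V₁‖ * ‖V₁ᵀ‖ := Matrix.l2_opNorm_mul _ _
      _ ≤ b' * 1 := by
          refine mul_le_mul hQV ?_ (norm_nonneg _) hb'0
          rw [opNorm_transpose]; exact hV₁n
      _ = b' := mul_one _
  have hM2 : ‖(1 - P) * Q‖ ≤ b' := by
    have : (1 - P) * Q = Y * U₁ᵀ := by
      rw [hQ, hYdef, ← Matrix.mul_assoc, Matrix.sub_mul, Matrix.one_mul]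
    rw [this]
    calc ‖Y * U₁ᵀ‖ ≤ ‖Y‖ * ‖U₁ᵀ‖ := Matrix.l2_opNorm_mul _ _
      _ ≤ b' * 1 := by
          refine mul_le_mul hYn ?_ (norm_nonneg _) hb'0
          rw [opNorm_transpose]; exact hU₁n
      _ = b' := mul_one _
  -- (12) combine
  have hfinal : ‖P - Q‖ ≤ b' := by
    refine opNorm_le_of_forall _ hb'0 fun v => ?_
    obtain ⟨q, hq⟩ : ∃ u, u = Q *ᵥ v := ⟨_, rfl⟩
    obtain ⟨r, hr⟩ : ∃ u, u = (1 - Q) *ᵥ v := ⟨_, rfl⟩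
    obtain ⟨w₁, hw₁⟩ : ∃ u, u = (P * (1 - Q)) *ᵥ v := ⟨_, rfl⟩
    obtain ⟨w₂, hw₂⟩ : ∃ u, u = ((1 - P) * Q) *ᵥ v := ⟨_, rfl⟩
    have hdecomp : (P - Q) *ᵥ v = w₁ - w₂ := by
      rw [hw₁, hw₂, ← Matrix.sub_mulVec]
      congr 1
      rw [Matrix.mul_sub, Matrix.mul_one, Matrix.sub_mul, Matrix.one_mul]
      abel
    have hPP : P * P = P := by rw [hP]; exact proj_idem hV₁o
    have hQQ : Q * Q = Q := by rw [hQ]; exact proj_idem hU₁o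
    have hPsymm : Pᵀ = P := by rw [hP]; exact proj_symm V₁
    have h1Q1Q : (1 - Q) * (1 - Q) = 1 - Q := by
      have h0 : (1 - Q) * Q = 0 := by rw [Matrix.sub_mul, Matrix.one_mul, hQQ, sub_self]
      rw [Matrix.mul_sub, Matrix.mul_one, h0, sub_zero]
    have hQsymm : Qᵀ = Q := by rw [hQ]; exact proj_symm U₁
    have h1PP : (1 - P) * P = 0 := by rw [Matrix.sub_mul, Matrix.one_mul, hPP, sub_self]
    have hkey : ((1 - P) * Q)ᵀ * (P * (1 - Q)) = 0 := by
      calc ((1 - P) * Q)ᵀ * (P * (1 - Q))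
          = (Qᵀ * (1 - P)ᵀ) * (P * (1 - Q)) := by rw [Matrix.transpose_mul]
        _ = (Q * (1 - P)) * (P * (1 - Q)) := by
            rw [hQsymm, Matrix.transpose_sub, Matrix.transpose_one, hPsymm]
        _ = Q * ((1 - P) * (P * (1 - Q))) := Matrix.mul_assoc _ _ _
        _ = Q * (((1 - P) * P) * (1 - Q)) := by rw [Matrix.mul_assoc]
        _ = 0 := by rw [h1PP, Matrix.zero_mul, Matrix.mul_zero]
    have horth : w₁ ⬝ᵥ w₂ = 0 := by
      calc w₁ ⬝ᵥ w₂ = ((P * (1 - Q)) *ᵥ v) ⬝ᵥ (((1 - P) * Q) *ᵥ v) := by rw [hw₁, hw₂]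
        _ = (((P * (1 - Q)) *ᵥ v) ᵥ* ((1 - P) * Q)) ⬝ᵥ v := Matrix.dotProduct_mulVec _ _ _
        _ = (((1 - P) * Q)ᵀ *ᵥ ((P * (1 - Q)) *ᵥ v)) ⬝ᵥ v := by
            rw [Matrix.mulVec_transpose]
        _ = ((((1 - P) * Q)ᵀ * (P * (1 - Q))) *ᵥ v) ⬝ᵥ v := by
            rw [Matrix.mulVec_mulVec]
        _ = 0 := by rw [hkey, Matrix.zero_mulVec, zero_dotProduct]
    have hw₁r : w₁ = (P * (1 - Q)) *ᵥ r := by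
      calc w₁ = (P * (1 - Q)) *ᵥ v := hw₁
        _ = ((P * (1 - Q)) * (1 - Q)) *ᵥ v := by rw [Matrix.mul_assoc, h1Q1Q]
        _ = (P * (1 - Q)) *ᵥ ((1 - Q) *ᵥ v) := (Matrix.mulVec_mulVec _ _ _).symm
        _ = (P * (1 - Q)) *ᵥ r := by rw [hr]
    have hw₂q : w₂ = ((1 - P) * Q) *ᵥ q := by
      calc w₂ = ((1 - P) * Q) *ᵥ v := hw₂
        _ = (((1 - P) * Q) * Q) *ᵥ v := by rw [Matrix.mul_assoc, hQQ]
        _ = ((1 - P) * Q) *ᵥ (Q *ᵥ v) := (Matrix.mulVec_mulVec _ _ _).symm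
        _ = ((1 - P) * Q) *ᵥ q := by rw [hq]
    have hb1 : ‖En w₁‖ ≤ b' * ‖En r‖ := by
      rw [hw₁r]
      exact le_trans (mulVec_norm_le _ _) (mul_le_mul_of_nonneg_right hM1 (norm_nonneg _))
    have hb2 : ‖En w₂‖ ≤ b' * ‖En q‖ := by
      rw [hw₂q]
      exact le_trans (mulVec_norm_le _ _) (mul_le_mul_of_nonneg_right hM2 (norm_nonneg _))
    have hpyv : ‖En r‖ ^ 2 + ‖En q‖ ^ 2 = ‖En v‖ ^ 2 := by
      rw [En_norm_sq, En_norm_sq, En_norm_sq, hr, hq, hQ]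
      exact proj_pyth hU₁o v
    have hsq : ‖En ((P - Q) *ᵥ v)‖ ^ 2 = ‖En w₁‖ ^ 2 + ‖En w₂‖ ^ 2 := by
      rw [hdecomp, En_sub]
      have hinner : (inner ℝ (En w₁) (En w₂) : ℝ) = 0 := by rw [En_inner, horth]
      rw [norm_sub_sq_real, hinner]
      ring
    refine sq_le_imp_le (norm_nonneg _) (by positivity) ?_
    rw [hsq, mul_pow]
    have e1 : ‖En w₁‖ ^ 2 ≤ b' ^ 2 * ‖En r‖ ^ 2 := by nlinarith [norm_nonneg (En w₁), norm_nonneg (En r)]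
    have e2 : ‖En w₂‖ ^ 2 ≤ b' ^ 2 * ‖En q‖ ^ 2 := by nlinarith [norm_nonneg (En w₂), norm_nonneg (En q)]
    nlinarith [hpyv]
  -- conclusion
  calc ‖P - Q‖ ≤ b' := hfinal
    _ ≤ ε / (lam - 2 * ε) := by
        rw [hb']
        apply div_le_div_of_nonneg_left hε0 (by linarith) (by linarith)

end
end
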